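/- For all subsets S, T ⊆ [n], the counts #{σ ∈ S_n : Rmil(σ)=S, Lmil(σ)=T}, #{σ ∈ S_n : Lmap(σ)=S, Lmip(σ)=T}, and #{σ ∈ S_n : Cyc(σ)=S, Lmic1(σ)=T} are all equal, and each of these pairs of set-valued statistics is symmetric, e.g. #{σ : Rmil(σ)=S, Lmil(σ)=T} = #{σ : Rmil(σ)=T, Lmil(σ)=S}, and similarly for (Lmap, Lmip) and (Cyc, Lmic1). -/

import Mathlib

open scoped Classical

namespace SortIdx

variable {n : ℕ}

noncomputable section

/-- The inversion number `inv σ := #{(i,j) : i < j ∧ σ i > σ j}`. -/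
def inv (σ : Equiv.Perm (Fin n)) : ℕ :=
  (Finset.univ.filter (fun p : Fin n × Fin n => p.1 < p.2 ∧ σ p.2 < σ p.1)).card

/-- The inversion set `Inv σ := {(i,j) : i < j ∧ σ i > σ j}`. -/
def InvSet (σ : Equiv.Perm (Fin n)) : Finset (Fin n × Fin n) :=
  Finset.univ.filter (fun p : Fin n × Fin n => p.1 < p.2 ∧ σ p.2 < σ p.1)

/-- Right-to-left minimum letters. -/
def RmilSet (σ : Equiv.Perm (Fin n)) : Finset (Fin n) :=
  (Finset.univ.filter (fun i => ∀ j, i < j → σ i < σ j)).image σ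

/-- The number of right-to-left minima. -/
def rmin (σ : Equiv.Perm (Fin n)) : ℕ := (RmilSet σ).card

/-- Right-to-left minimum places. -/
def RmipSet (σ : Equiv.Perm (Fin n)) : Finset (Fin n) :=
  Finset.univ.filter (fun i => ∀ j, i < j → σ i < σ j)

/-- Right-to-left maximum letters. -/
def RmalSet (σ : Equiv.Perm (Fin n)) : Finset (Fin n) :=
  (Finset.univ.filter (fun i => ∀ j, i < j → σ j < σ i)).image σ

/-- The number of right-to-left maxima. -/
def rmax (σ : Equiv.Perm (Fin n)) : ℕ := (RmalSet σ).card

/-- Left-to-right minimum letters. -/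
def LmilSet (σ : Equiv.Perm (Fin n)) : Finset (Fin n) :=
  (Finset.univ.filter (fun i => ∀ j, j < i → σ i < σ j)).image σ

/-- The number of left-to-right minima. -/
def lmin (σ : Equiv.Perm (Fin n)) : ℕ := (LmilSet σ).card

/-- Left-to-right minimum places. -/
def LmipSet (σ : Equiv.Perm (Fin n)) : Finset (Fin n) :=
  Finset.univ.filter (fun i => ∀ j, j < i → σ i < σ j)

/-- Left-to-right maximum letters. -/
def LmalSet (σ : Equiv.Perm (Fin n)) : Finset (Fin n) :=
  (Finset.univ.filter (fun i => ∀ j, j < i → σ j < σ i)).image σ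

/-- The number of left-to-right maxima. -/
def lmax (σ : Equiv.Perm (Fin n)) : ℕ := (LmalSet σ).card

/-- Left-to-right maximum places. -/
def LmapSet (σ : Equiv.Perm (Fin n)) : Finset (Fin n) :=
  Finset.univ.filter (fun i => ∀ j, j < i → σ j < σ i)

/-- `Cyc σ`: the set of smallest elements of the cycles of `σ`
(`i` is smallest in its cycle iff `i ≤ σ^k i` for all `k`). -/
def CycSet (σ : Equiv.Perm (Fin n)) : Finset (Fin n) :=
  Finset.univ.filter (fun i => ∀ k : ℕ, i ≤ (σ ^ k) i)

/-- The number of cycles of `σ` (fixed points included). -/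
def cyc (σ : Equiv.Perm (Fin n)) : ℕ := (CycSet σ).card

/-- One step of the sorting process computing the sorting index: repeatedly
put the largest not-yet-fixed letter `j` in its place by the transposition
`(i j)` where `i = σ⁻¹ j` is the place of the letter `j`, recording the
distance `j - i`.  This produces the unique factorization
`σ = (i₁ j₁)(i₂ j₂)⋯(i_k j_k)` with `j₁ < ⋯ < j_k`, `i_r < j_r`, and sums
the `j_r - i_r`.  The fuel `n` is always sufficient. -/
def sorAux : ℕ → Equiv.Perm (Fin n) → ℕ
  | 0, _ => 0
  | (fuel + 1), σ =>
    if h : σ.support.Nonempty then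
      (((σ.support.max' h : Fin n) : ℕ) - ((σ⁻¹ (σ.support.max' h) : Fin n) : ℕ)) +
        sorAux fuel (σ * Equiv.swap (σ⁻¹ (σ.support.max' h)) (σ.support.max' h))
    else 0

/-- The sorting index of Petersen. -/
def sor (σ : Equiv.Perm (Fin n)) : ℕ := sorAux n σ

theorem bcode_exists (σ : Equiv.Perm (Fin n)) (i : Fin n) :
    ∃ k : ℕ, 0 < k ∧ (σ⁻¹ ^ k) i ≤ i := by
  refine ⟨orderOf σ⁻¹, orderOf_pos σ⁻¹, ?_⟩
  rw [pow_orderOf_eq_one]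
  simp

/-- The `B`-code of `σ`: `Bcode σ i = σ^(-k) i` where `k ≥ 1` is minimal with
`σ^(-k) i ≤ i`. -/
def Bcode (σ : Equiv.Perm (Fin n)) (i : Fin n) : Fin n :=
  (σ⁻¹ ^ (Nat.find (bcode_exists σ i))) i

/-- The `B`-code as a sequence in `L_n` (1-indexed values: the entry at place
`i` is the 1-indexed name of the letter `Bcode σ i`). -/
def BcodeNat (σ : Equiv.Perm (Fin n)) : Fin n → ℕ :=
  fun i => ((Bcode σ i : Fin n) : ℕ) + 1

/-- The Lehmer code: `Leh σ i = #{j : j ≤ i ∧ σ j ≤ σ i}` (1-indexed values). -/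
def Leh (σ : Equiv.Perm (Fin n)) : Fin n → ℕ :=
  fun i => (Finset.univ.filter (fun j => j ≤ i ∧ σ j ≤ σ i)).card

/-- The `A`-code: `A σ := Leh σ⁻¹`. -/
def Acode (σ : Equiv.Perm (Fin n)) : Fin n → ℕ := Leh σ⁻¹

/-- `O(code) := {i : code i = 1}` (for `1`-indexed codes in `L_n`). -/
def Oset (code : Fin n → ℕ) : Finset (Fin n) :=
  Finset.univ.filter (fun i => code i = 1)

/-- `Lmic1 σ := O(B σ)`, the set of places where the `B`-code equals `1`,
equivalently the left-to-right minima of the shifted cycle containing `1`. -/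
def Lmic1Set (σ : Equiv.Perm (Fin n)) : Finset (Fin n) :=
  Oset (BcodeNat σ)

/-- `lmic1 σ := #{i : (B σ)_i = 1}`. -/
def lmic1 (σ : Equiv.Perm (Fin n)) : ℕ := (Lmic1Set σ).card

/-- The bijection `φ = B⁻¹ ∘ A` of Foata–Han. -/
def phi (σ : Equiv.Perm (Fin n)) : Equiv.Perm (Fin n) :=
  Function.invFun BcodeNat (Acode σ)

/-- The algorithm computing the induced set of a code: the list argument is
the list of places still to process (from the last to the first), `S` is the
set of letters still available.  At place `i` we pick the `(code i)`-th
smallest element `l` of `S` (1-indexed), put the pairs `(l, j)` for `j ∈ S`,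
`j > l` into the answer and remove `l` from `S`. -/
def inducedAux : List (Fin n) → Finset (Fin n) → (Fin n → ℕ) → Finset (Fin n × Fin n)
  | [], _, _ => ∅
  | (i :: is), S, code =>
      ((S.filter (fun j => (S.sort (· ≤ ·)).getD (code i - 1) i < j)).image
          (fun j => ((S.sort (· ≤ ·)).getD (code i - 1) i, j))) ∪
        inducedAux is (S.erase ((S.sort (· ≤ ·)).getD (code i - 1) i)) code

/-- The induced set `⟨code⟩` of a code in `L_n`. -/
def induced (code : Fin n → ℕ) : Finset (Fin n × Fin n) :=
  inducedAux (List.finRange n).reverse Finset.univ code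

/-- The sorting set `Sor σ := ⟨B σ⟩`. -/
def SorSet (σ : Equiv.Perm (Fin n)) : Finset (Fin n × Fin n) :=
  induced (BcodeNat σ)

/-- The descent set (as a set of places `i`, `0`-indexed, such that
`σ i > σ (i+1)`). -/
def DesSet (σ : Equiv.Perm (Fin n)) : Finset (Fin n) :=
  Finset.univ.filter (fun i => ∃ h : (i : ℕ) + 1 < n, σ ⟨(i : ℕ) + 1, h⟩ < σ i)

/-- The major index (descents being counted `1`-indexed). -/
def maj (σ : Equiv.Perm (Fin n)) : ℕ :=
  ∑ i ∈ DesSet σ, ((i : ℕ) + 1)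

/-- The charge `chg σ := ∑_{i ∈ Des σ⁻¹} (n - i)` (descents `1`-indexed). -/
def chg (σ : Equiv.Perm (Fin n)) : ℕ :=
  ∑ i ∈ DesSet σ⁻¹, (n - ((i : ℕ) + 1))

/-- The reverse-complement of `σ` : `τ i = n + 1 - σ (n + 1 - i)` (1-indexed). -/
def revcomp (σ : Equiv.Perm (Fin n)) : Equiv.Perm (Fin n) :=
  Fin.revPerm * σ * Fin.revPerm

/-- The reverse major index `rmaj σ := maj (revcomp σ)`. -/
def rmaj (σ : Equiv.Perm (Fin n)) : ℕ := maj (revcomp σ)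

end

end SortIdx

theorem Equiv.Perm.apply_inv_self {α : Type*} (f : Equiv.Perm α) (x : α) : f (f⁻¹ x) = x :=
  f.apply_symm_apply x

theorem Equiv.Perm.inv_apply_self {α : Type*} (f : Equiv.Perm α) (x : α) : f⁻¹ (f x) = x :=
  f.symm_apply_apply x

namespace SortIdx

variable {n : ℕ}

lemma bcode_le (σ : Equiv.Perm (Fin n)) (i : Fin n) : Bcode σ i ≤ i :=
  (Nat.find_spec (bcode_exists σ i)).2

lemma bcode_mid (σ : Equiv.Perm (Fin n)) (i : Fin n) {j : ℕ} (h0 : 0 < j)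
    (hj : j < Nat.find (bcode_exists σ i)) : i < (σ⁻¹ ^ j) i := by
  have h := Nat.find_min (bcode_exists σ i) hj
  push_neg at h
  exact h h0

lemma bcode_eq_of (σ : Equiv.Perm (Fin n)) (i : Fin n) (K : ℕ) (hK : 0 < K)
    (hle : (σ⁻¹ ^ K) i ≤ i) (hmid : ∀ j, 0 < j → j < K → i < (σ⁻¹ ^ j) i) :
    Bcode σ i = (σ⁻¹ ^ K) i := by
  have h1 : Nat.find (bcode_exists σ i) ≤ K := Nat.find_min' _ ⟨hK, hle⟩
  have h2 : ¬ Nat.find (bcode_exists σ i) < K := by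
    intro h
    have hs := Nat.find_spec (bcode_exists σ i)
    exact absurd hs.2 (not_le.mpr (hmid _ hs.1 h))
  have h3 : Nat.find (bcode_exists σ i) = K := le_antisymm h1 (not_lt.mp h2)
  rw [Bcode, h3]

lemma bcode_top (σ : Equiv.Perm (Fin n)) (i : Fin n) (h : ∀ j, i < j → σ j = j) :
    Bcode σ i = σ⁻¹ i := by
  have hle : σ⁻¹ i ≤ i := by
    by_contra hlt
    push_neg at hlt
    have h2 := h _ hlt
    have : σ (σ⁻¹ i) = i := σ.apply_inv_self i
    rw [h2] at this
    exact absurd this (ne_of_gt hlt)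
  have h4 := bcode_eq_of σ i 1 one_pos (by simpa using hle)
    (fun j hj hj1 => absurd hj1 (by omega))
  simpa using h4

end SortIdx
namespace SortIdx

variable {n : ℕ}

/-- auxiliary index-skipping function -/
def skipg (ρ : Equiv.Perm (Fin n)) (w i : Fin n) : ℕ → ℕ
  | 0 => 0
  | (j+1) => if (ρ ^ (skipg ρ w i j + 1)) i = w then skipg ρ w i j + 2
             else skipg ρ w i j + 1

lemma skipg_strictMono (ρ : Equiv.Perm (Fin n)) (w i : Fin n) :
    StrictMono (skipg ρ w i) := by
  apply strictMono_nat_of_lt_succ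
  intro j
  simp only [skipg]
  split <;> omega

lemma bcode_swap (σ : Equiv.Perm (Fin n)) (a w i : Fin n) (ha : σ⁻¹ w = a)
    (hai : a ≠ w) (hi : i < w) :
    Bcode (σ * Equiv.swap a w) i = Bcode σ i := by
  set ρ := σ⁻¹ with hρ
  set s : Fin n → Fin n := fun x => if ρ x = w then ρ (ρ x) else ρ x with hs
  have hσa : σ a = w := by rw [← ha]; exact σ.apply_inv_self w
  have hstep : ∀ x : Fin n, x ≠ w → ((σ * Equiv.swap a w)⁻¹) x = s x := by
    intro x hx
    have : (σ * Equiv.swap a w)⁻¹ = Equiv.swap a w * σ⁻¹ := by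
      rw [mul_inv_rev, Equiv.swap_inv]
    rw [this]
    simp only [Equiv.Perm.mul_apply, hs]
    by_cases h1 : ρ x = w
    · rw [h1]; simp [ha]
    · have h2 : ρ x ≠ a := by
        intro h2
        apply hx
        have : σ (ρ x) = σ a := by rw [h2]
        rwa [hρ, σ.apply_inv_self, hσa] at this
      rw [Equiv.swap_apply_of_ne_of_ne h2 h1, if_neg h1]
  have hsne : ∀ x : Fin n, x ≠ w → s x ≠ w := by
    intro x hx
    simp only [hs]
    by_cases h1 : ρ x = w
    · rw [if_pos h1, h1, hρ, ha]; exact hai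
    · rwa [if_neg h1]
  have hiter : ∀ k : ℕ, ((σ * Equiv.swap a w)⁻¹ ^ k) i = s^[k] i ∧ s^[k] i ≠ w := by
    intro k
    induction k with
    | zero => exact ⟨rfl, ne_of_lt hi⟩
    | succ k ih =>
      constructor
      · rw [pow_succ', Equiv.Perm.mul_apply, ih.1, Function.iterate_succ_apply',
          hstep _ ih.2]
      · rw [Function.iterate_succ_apply']
        exact hsne _ ih.2
  have hgs : ∀ k : ℕ, s^[k] i = (ρ ^ (skipg ρ w i k)) i := by
    intro k
    induction k with
    | zero => simp [skipg]
    | succ k ih =>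
      rw [Function.iterate_succ_apply', ih]
      simp only [hs, skipg]
      have hp : ∀ m : ℕ, ρ ((ρ ^ m) i) = (ρ ^ (m+1)) i := by
        intro m; rw [pow_succ', Equiv.Perm.mul_apply]
      by_cases h1 : (ρ ^ (skipg ρ w i k + 1)) i = w
      · rw [if_pos h1, if_pos (by rw [hp]; exact h1), hp, hp]
      · rw [if_neg h1, if_neg (by rw [hp]; exact h1), hp]
  set K := Nat.find (bcode_exists σ i) with hK
  have hKspec := Nat.find_spec (bcode_exists σ i)
  have hKpos : 0 < K := hKspec.1
  have hKle : (ρ ^ K) i ≤ i := hKspec.2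
  have hgK : K ≤ skipg ρ w i K := (skipg_strictMono ρ w i).le_apply
  have hex : ∃ j, K ≤ skipg ρ w i j := ⟨K, hgK⟩
  set K' := Nat.find hex with hK'
  have hK'spec : K ≤ skipg ρ w i K' := Nat.find_spec hex
  have hK'pos : 0 < K' := by
    by_contra h
    have h0 : K' = 0 := by omega
    have hsk0 : skipg ρ w i 0 = 0 := rfl
    rw [h0, hsk0] at hK'spec
    omega
  have hgj0 : skipg ρ w i (K' - 1) < K := by
    have := Nat.find_min hex (show K' - 1 < K' by omega)
    omega
  have hgK' : skipg ρ w i K' = K := by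
    have hK'eq : K' = (K' - 1) + 1 := by omega
    have hspec' : K ≤ skipg ρ w i ((K' - 1) + 1) := by rw [← hK'eq]; exact hK'spec
    rw [hK'eq]
    simp only [skipg] at hspec' ⊢
    by_cases h1 : (ρ ^ (skipg ρ w i (K' - 1) + 1)) i = w
    · rw [if_pos h1] at hspec' ⊢
      rcases Nat.lt_or_ge (skipg ρ w i (K' - 1) + 1) K with h2 | h2
      · omega
      · exfalso
        have hKeq : K = skipg ρ w i (K' - 1) + 1 := by omega
        rw [← hKeq] at h1
        rw [h1] at hKle
        exact absurd hKle (not_le.mpr hi)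
    · rw [if_neg h1] at hspec' ⊢
      omega
  have hfin : Bcode (σ * Equiv.swap a w) i = ((σ * Equiv.swap a w)⁻¹ ^ K') i := by
    apply bcode_eq_of
    · exact hK'pos
    · rw [(hiter K').1, hgs, hgK']
      exact hKle
    · intro j hj0 hjK'
      rw [(hiter j).1, hgs]
      apply bcode_mid σ i
      · have := (skipg_strictMono ρ w i).le_apply (x := j)
        omega
      · rw [← hK]
        calc skipg ρ w i j < skipg ρ w i K' := skipg_strictMono ρ w i hjK'
          _ = K := hgK'
  rw [hfin, (hiter K').1, hgs, hgK']
  rfl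

end SortIdx
namespace SortIdx

variable {n : ℕ}

lemma fin_lt_of_val (m : ℕ) (hmn : m < n) (j : Fin n) (h : m + 1 ≤ (j:ℕ)) :
    (⟨m, hmn⟩ : Fin n) < j := by
  simp only [Fin.lt_def]; omega

lemma bcode_inj : Function.Injective (Bcode (n := n)) := by
  suffices H : ∀ m : ℕ, ∀ σ τ : Equiv.Perm (Fin n),
      (∀ j : Fin n, m ≤ (j:ℕ) → σ j = j) → (∀ j : Fin n, m ≤ (j:ℕ) → τ j = j) →
      Bcode σ = Bcode τ → σ = τ by
    intro σ τ h
    exact H n σ τ (fun j hj => absurd j.isLt (by omega))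
      (fun j hj => absurd j.isLt (by omega)) h
  intro m
  induction m with
  | zero =>
    intro σ τ hσ hτ _
    ext j
    rw [hσ j (Nat.zero_le _), hτ j (Nat.zero_le _)]
  | succ m ih =>
    intro σ τ hσ hτ hB
    by_cases hmn : m < n
    · set w : Fin n := ⟨m, hmn⟩ with hw
      have hσfix : ∀ j : Fin n, w < j → σ j = j := fun j hj =>
        hσ j (by simp only [hw, Fin.lt_def] at hj; omega)
      have hτfix : ∀ j : Fin n, w < j → τ j = j := fun j hj =>
        hτ j (by simp only [hw, Fin.lt_def] at hj; omega)
      have hBσ : Bcode σ w = σ⁻¹ w := bcode_top σ w hσfix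
      have hBτ : Bcode τ w = τ⁻¹ w := bcode_top τ w hτfix
      set a : Fin n := σ⁻¹ w with hha
      have haτ : τ⁻¹ w = a := by rw [← hBτ, ← hB]; exact hBσ
      have hale : a ≤ w := hBσ ▸ bcode_le σ w
      have hσa : σ a = w := by rw [hha]; exact σ.apply_inv_self w
      have hτa : τ a = w := by rw [← haτ]; exact τ.apply_inv_self w
      by_cases haw : a = w
      · have hσw : σ w = w := by rw [← haw]; rw [hσa]; exact haw.symm
        have hτw : τ w = w := by rw [← haw]; rw [hτa]; exact haw.symm
        apply ih σ τ ?_ ?_ hB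
        · intro j hj
          rcases Nat.eq_or_lt_of_le hj with h | h
          · have : j = w := by rw [hw]; exact Fin.ext h.symm
            rw [this]; exact hσw
          · exact hσ j h
        · intro j hj
          rcases Nat.eq_or_lt_of_le hj with h | h
          · have : j = w := by rw [hw]; exact Fin.ext h.symm
            rw [this]; exact hτw
          · exact hτ j h
      · set σ' := σ * Equiv.swap a w with hσ'
        set τ' := τ * Equiv.swap a w with hτ'
        have hσ'w : σ' w = w := by
          rw [hσ', Equiv.Perm.mul_apply, Equiv.swap_apply_right]; exact hσa
        have hτ'w : τ' w = w := by
          rw [hτ', Equiv.Perm.mul_apply, Equiv.swap_apply_right]; exact hτa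
        have hσ'fixgt : ∀ j : Fin n, w < j → σ' j = j := by
          intro j hj
          rw [hσ', Equiv.Perm.mul_apply,
            Equiv.swap_apply_of_ne_of_ne (by exact ne_of_gt (lt_of_le_of_lt hale hj))
              (ne_of_gt hj)]
          exact hσfix j hj
        have hτ'fixgt : ∀ j : Fin n, w < j → τ' j = j := by
          intro j hj
          rw [hτ', Equiv.Perm.mul_apply,
            Equiv.swap_apply_of_ne_of_ne (by exact ne_of_gt (lt_of_le_of_lt hale hj))
              (ne_of_gt hj)]
          exact hτfix j hj
        have hσ'fixge : ∀ j : Fin n, w ≤ j → σ' j = j := by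
          intro j hj
          rcases eq_or_lt_of_le hj with h | h
          · rw [← h]; exact hσ'w
          · exact hσ'fixgt j h
        have hτ'fixge : ∀ j : Fin n, w ≤ j → τ' j = j := by
          intro j hj
          rcases eq_or_lt_of_le hj with h | h
          · rw [← h]; exact hτ'w
          · exact hτ'fixgt j h
        have hfixinv : ∀ (π : Equiv.Perm (Fin n)) (x : Fin n), π x = x → π⁻¹ x = x := by
          intro π x hx
          conv_lhs => rw [← hx]
          exact π.inv_apply_self x
        have key : Bcode σ' = Bcode τ' := by
          funext i
          rcases lt_trichotomy i w with hi | hi | hi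
          · rw [hσ', hτ', bcode_swap σ a w i hha.symm haw hi,
              bcode_swap τ a w i haτ haw hi, hB]
          · rw [hi, bcode_top σ' w hσ'fixgt, bcode_top τ' w hτ'fixgt,
              hfixinv σ' w hσ'w, hfixinv τ' w hτ'w]
          · rw [bcode_top σ' i (fun j hj => hσ'fixgt j (lt_trans hi hj)),
              bcode_top τ' i (fun j hj => hτ'fixgt j (lt_trans hi hj)),
              hfixinv σ' i (hσ'fixgt i hi), hfixinv τ' i (hτ'fixgt i hi)]
        have heq : σ' = τ' := by
          apply ih σ' τ' ?_ ?_ key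
          · intro j hj
            apply hσ'fixge
            rw [hw, Fin.le_def]; exact hj
          · intro j hj
            apply hτ'fixge
            rw [hw, Fin.le_def]; exact hj
        have : σ' * Equiv.swap a w = τ' * Equiv.swap a w := by rw [heq]
        rwa [hσ', hτ', mul_assoc, mul_assoc, Equiv.swap_mul_self, mul_one, mul_one]
          at this
    · exact ih σ τ (fun j hj => absurd j.isLt (by omega))
        (fun j hj => absurd j.isLt (by omega)) hB

end SortIdx
namespace SortIdx

variable {n : ℕ}

lemma perm_inv_pow_comm_apply (σ : Equiv.Perm (Fin n)) (a b : ℕ) (x : Fin n) :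
    (σ⁻¹ ^ a) ((σ ^ b) x) = (σ ^ b) ((σ⁻¹ ^ a) x) := by
  have hc : Commute (σ⁻¹ ^ a) (σ ^ b) := (((Commute.refl σ).inv_left).pow_pow a b)
  rw [← Equiv.Perm.mul_apply, hc.eq, Equiv.Perm.mul_apply]

lemma inv_eq_pow (σ : Equiv.Perm (Fin n)) : σ⁻¹ = σ ^ (orderOf σ - 1) := by
  have hc : 0 < orderOf σ := orderOf_pos σ
  have h : σ * σ ^ (orderOf σ - 1) = 1 := by
    rw [← pow_succ', Nat.sub_add_cancel hc, pow_orderOf_eq_one]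
  exact inv_eq_of_mul_eq_one_right h

lemma inv_pow_eq (σ : Equiv.Perm (Fin n)) (m : ℕ) :
    σ⁻¹ ^ m = σ ^ ((orderOf σ - 1) * m) := by
  rw [inv_eq_pow σ, ← pow_mul]

lemma mem_cycSet_iff (σ : Equiv.Perm (Fin n)) (i : Fin n) :
    i ∈ CycSet σ ↔ Bcode σ i = i := by
  rw [CycSet, Finset.mem_filter]
  simp only [Finset.mem_univ, true_and]
  constructor
  · intro h
    have hge : i ≤ Bcode σ i := by
      rw [Bcode, inv_pow_eq σ]
      exact h _
    exact le_antisymm (bcode_le σ i) hge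
  · intro h k
    set K := Nat.find (bcode_exists σ i) with hK
    have hKpos : 0 < K := (Nat.find_spec (bcode_exists σ i)).1
    have h1 : (σ⁻¹ ^ K) i = i := h
    have hfix : (σ ^ K) i = i := by
      have h2 := congrArg (σ ^ K) h1
      rw [inv_pow, Equiv.Perm.apply_inv_self] at h2
      exact h2.symm
    have hfixq : ∀ q : ℕ, (σ ^ (K * q)) i = i := by
      intro q
      induction q with
      | zero => simp
      | succ q ihq =>
        rw [Nat.mul_succ, pow_add, Equiv.Perm.mul_apply, hfix, ihq]
    have hr : ∀ r : ℕ, r < K → i ≤ (σ ^ r) i := by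
      intro r hrK
      rcases Nat.eq_zero_or_pos r with h0 | h0
      · simp [h0]
      · have hinner : (σ⁻¹ ^ r) ((σ ^ r) i) = i := by
          rw [inv_pow]; exact (σ ^ r).inv_apply_self i
        have key : (σ ^ r) i = (σ⁻¹ ^ (K - r)) i := by
          have h2 : (σ⁻¹ ^ (K - r)) i = (σ⁻¹ ^ (K - r)) ((σ⁻¹ ^ r) ((σ ^ r) i)) := by
            rw [hinner]
          rw [h2, ← Equiv.Perm.mul_apply, ← pow_add, Nat.sub_add_cancel (le_of_lt hrK),
            perm_inv_pow_comm_apply, h1]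
        rw [key]
        exact le_of_lt (bcode_mid σ i (show 0 < K - r by omega)
          (show K - r < Nat.find (bcode_exists σ i) by rw [← hK]; omega))
    have hk1 : (σ ^ k) i = (σ ^ (k % K)) ((σ ^ (K * (k / K))) i) := by
      conv_lhs => rw [(Nat.mod_add_div k K).symm]
      rw [pow_add, Equiv.Perm.mul_apply]
    rw [hk1, hfixq]
    exact hr _ (Nat.mod_lt _ hKpos)

lemma lmic1Set_eq (σ : Equiv.Perm (Fin n)) :
    Lmic1Set σ = Finset.univ.filter (fun i => (Bcode σ i : ℕ) = 0) := by
  rw [Lmic1Set, Oset]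
  apply Finset.filter_congr
  intro i _
  simp only [BcodeNat]
  omega

lemma cycSet_eq (σ : Equiv.Perm (Fin n)) :
    CycSet σ = Finset.univ.filter (fun i => Bcode σ i = i) := by
  ext i
  rw [mem_cycSet_iff]
  simp

end SortIdx
namespace SortIdx

variable {n : ℕ}

lemma leh_filter_eq (σ : Equiv.Perm (Fin n)) (i : Fin n) :
    Finset.univ.filter (fun j => j ≤ i ∧ σ j ≤ σ i)
      = (Finset.Iic i).filter (fun j => σ j ≤ σ i) := by
  ext j
  simp [Finset.mem_Iic]

lemma leh_pos (σ : Equiv.Perm (Fin n)) (i : Fin n) : 1 ≤ Leh σ i := by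
  rw [Leh]
  apply Finset.card_pos.mpr
  exact ⟨i, Finset.mem_filter.mpr ⟨Finset.mem_univ i, le_refl i, le_refl (σ i)⟩⟩

lemma leh_le (σ : Equiv.Perm (Fin n)) (i : Fin n) : Leh σ i ≤ (i : ℕ) + 1 := by
  rw [Leh, leh_filter_eq]
  calc ((Finset.Iic i).filter (fun j => σ j ≤ σ i)).card ≤ (Finset.Iic i).card :=
        Finset.card_filter_le _ _
    _ = (i : ℕ) + 1 := Fin.card_Iic i

lemma rank_lt (A : Finset (Fin n)) {x y : Fin n} (hy : y ∈ A) (hxy : x < y) :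
    (A.filter (fun a => a ≤ x)).card < (A.filter (fun a => a ≤ y)).card := by
  apply Finset.card_lt_card
  rw [Finset.ssubset_def]
  constructor
  · intro a ha
    rw [Finset.mem_filter] at *
    exact ⟨ha.1, le_trans ha.2 (le_of_lt hxy)⟩
  · intro hsub
    have hmem : y ∈ A.filter (fun a => a ≤ y) := Finset.mem_filter.mpr ⟨hy, le_refl y⟩
    have := (Finset.mem_filter.mp (hsub hmem)).2
    exact absurd this (not_le.mpr hxy)

lemma rank_inj (A : Finset (Fin n)) {x y : Fin n} (hx : x ∈ A) (hy : y ∈ A)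
    (h : (A.filter (fun a => a ≤ x)).card = (A.filter (fun a => a ≤ y)).card) : x = y := by
  rcases lt_trichotomy x y with hlt | heq | hgt
  · exact absurd h (ne_of_lt (rank_lt A hy hlt))
  · exact heq
  · exact absurd h.symm (ne_of_lt (rank_lt A hx hgt))

lemma leh_eq_rank (σ : Equiv.Perm (Fin n)) (i : Fin n) :
    Leh σ i = (((Finset.Iic i).image σ).filter (fun a => a ≤ σ i)).card := by
  rw [Leh, leh_filter_eq, Finset.filter_image,
    Finset.card_image_of_injective _ σ.injective]

lemma leh_inj : Function.Injective (Leh (n := n)) := by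
  intro σ τ h
  by_contra hne
  have hD : (Finset.univ.filter (fun j => σ j ≠ τ j)).Nonempty := by
    by_contra hD
    rw [Finset.not_nonempty_iff_eq_empty] at hD
    apply hne
    ext j
    by_contra hc
    have : j ∈ Finset.univ.filter (fun j => σ j ≠ τ j) :=
      Finset.mem_filter.mpr ⟨Finset.mem_univ j, fun he => hc (congrArg Fin.val he)⟩
    rw [hD] at this
    exact absurd this (Finset.notMem_empty j)
  set i := Finset.max' _ hD with hi
  have himem : σ i ≠ τ i := (Finset.mem_filter.mp (Finset.max'_mem _ hD)).2
  have htail : ∀ j : Fin n, i < j → σ j = τ j := by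
    intro j hj
    by_contra hc
    have : j ≤ i := Finset.le_max' _ j (Finset.mem_filter.mpr ⟨Finset.mem_univ j, hc⟩)
    exact absurd hj (not_lt.mpr this)
  have hsub : ∀ (σ' τ' : Equiv.Perm (Fin n)), (∀ j, i < j → σ' j = τ' j) →
      (Finset.Iic i).image σ' ⊆ (Finset.Iic i).image τ' := by
    intro σ' τ' ht x hx
    obtain ⟨j, hj, rfl⟩ := Finset.mem_image.mp hx
    refine Finset.mem_image.mpr ⟨τ'⁻¹ (σ' j), ?_, τ'.apply_inv_self _⟩
    rw [Finset.mem_Iic] at hj ⊢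
    by_contra hc
    push_neg at hc
    have h2 := ht _ hc
    rw [τ'.apply_inv_self] at h2
    have h3 := σ'.injective h2
    rw [h3] at hc
    exact absurd hj (not_le.mpr hc)
  have hA : (Finset.Iic i).image σ = (Finset.Iic i).image τ :=
    Finset.Subset.antisymm (hsub σ τ htail) (hsub τ σ (fun j hj => (htail j hj).symm))
  have hσi : σ i ∈ (Finset.Iic i).image σ :=
    Finset.mem_image.mpr ⟨i, Finset.mem_Iic.mpr (le_refl i), rfl⟩
  have hτi : τ i ∈ (Finset.Iic i).image σ := by
    rw [hA]
    exact Finset.mem_image.mpr ⟨i, Finset.mem_Iic.mpr (le_refl i), rfl⟩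
  apply himem
  apply rank_inj _ hσi hτi
  have h' : Leh σ i = Leh τ i := congrFun h i
  rw [leh_eq_rank, leh_eq_rank, ← hA] at h'
  exact h'

end SortIdx
namespace SortIdx

variable {n : ℕ}

noncomputable def LehF (σ : Equiv.Perm (Fin n)) (i : Fin n) : Fin n :=
  ⟨Leh σ i - 1, by have h1 := leh_le σ i; have h2 := i.isLt; omega⟩

lemma lehF_le (σ : Equiv.Perm (Fin n)) (i : Fin n) : LehF σ i ≤ i := by
  rw [Fin.le_def]
  have h1 := leh_le σ i
  simp only [LehF]
  omega

lemma leh_eq_lehF (σ : Equiv.Perm (Fin n)) (i : Fin n) :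
    Leh σ i = (LehF σ i : ℕ) + 1 := by
  have h := leh_pos σ i
  simp only [LehF]
  omega

lemma lehF_inj : Function.Injective (LehF (n := n)) := by
  intro σ τ h
  apply leh_inj
  funext i
  rw [leh_eq_lehF, leh_eq_lehF, h]

lemma card_Iic_filter (σ : Equiv.Perm (Fin n)) (i : Fin n) :
    ((Finset.Iic i).filter (fun j => σ j ≤ σ i)).card = Leh σ i := by
  rw [Leh, leh_filter_eq]

lemma mem_lmapSet_iff (σ : Equiv.Perm (Fin n)) (i : Fin n) :
    i ∈ LmapSet σ ↔ LehF σ i = i := by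
  rw [LmapSet, Finset.mem_filter]
  simp only [Finset.mem_univ, true_and]
  have hfull : (∀ j, j < i → σ j < σ i) ↔ Leh σ i = (i : ℕ) + 1 := by
    constructor
    · intro h
      rw [Leh, leh_filter_eq]
      have : (Finset.Iic i).filter (fun j => σ j ≤ σ i) = Finset.Iic i := by
        apply Finset.filter_true_of_mem
        intro j hj
        rcases eq_or_lt_of_le (Finset.mem_Iic.mp hj) with h1 | h1
        · rw [h1]
        · exact le_of_lt (h j h1)
      rw [this, Fin.card_Iic]
    · intro h j hj
      have heq : (Finset.Iic i).filter (fun j => σ j ≤ σ i) = Finset.Iic i := by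
        apply Finset.eq_of_subset_of_card_le (Finset.filter_subset _ _)
        rw [card_Iic_filter, h, Fin.card_Iic]
      have hjmem : j ∈ (Finset.Iic i).filter (fun j => σ j ≤ σ i) := by
        rw [heq]; exact Finset.mem_Iic.mpr (le_of_lt hj)
      have hle := (Finset.mem_filter.mp hjmem).2
      rcases lt_or_eq_of_le hle with h1 | h1
      · exact h1
      · exact absurd (σ.injective h1) (ne_of_lt hj)
  rw [hfull, leh_eq_lehF]
  rw [Fin.ext_iff]
  omega

lemma mem_lmipSet_iff (σ : Equiv.Perm (Fin n)) (i : Fin n) :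
    i ∈ LmipSet σ ↔ (LehF σ i : ℕ) = 0 := by
  rw [LmipSet, Finset.mem_filter]
  simp only [Finset.mem_univ, true_and]
  have hone : (∀ j, j < i → σ i < σ j) ↔ Leh σ i = 1 := by
    constructor
    · intro h
      rw [Leh]
      rw [Finset.card_eq_one]
      refine ⟨i, ?_⟩
      ext j
      simp only [Finset.mem_filter, Finset.mem_univ, true_and, Finset.mem_singleton]
      constructor
      · rintro ⟨hj1, hj2⟩
        rcases eq_or_lt_of_le hj1 with h1 | h1
        · exact h1
        · exact absurd hj2 (not_le.mpr (h j h1))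
      · intro h1; rw [h1]; exact ⟨le_refl i, le_refl (σ i)⟩
    · intro h j hj
      have hsing : Finset.univ.filter (fun j => j ≤ i ∧ σ j ≤ σ i) = {i} := by
        rw [Finset.eq_singleton_iff_unique_mem]
        constructor
        · exact Finset.mem_filter.mpr ⟨Finset.mem_univ i, le_refl i, le_refl (σ i)⟩
        · intro x hx
          have hcard : (Finset.univ.filter (fun j => j ≤ i ∧ σ j ≤ σ i)).card = 1 := h
          rw [Finset.card_eq_one] at hcard
          obtain ⟨a, ha⟩ := hcard
          rw [ha, Finset.mem_singleton] at hx
          have : i ∈ ({a} : Finset (Fin n)) := by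
            rw [← ha]
            exact Finset.mem_filter.mpr ⟨Finset.mem_univ i, le_refl i, le_refl (σ i)⟩
          rw [Finset.mem_singleton] at this
          rw [hx, this]
      by_contra hc
      push_neg at hc
      have : j ∈ ({i} : Finset (Fin n)) := by
        rw [← hsing]
        exact Finset.mem_filter.mpr ⟨Finset.mem_univ j, le_of_lt hj, hc⟩
      rw [Finset.mem_singleton] at this
      exact absurd this (ne_of_lt hj)
  rw [hone, leh_eq_lehF]
  omega

end SortIdx
namespace SortIdx

variable {n : ℕ}

/-- The code space. -/
def Ln (n : ℕ) : Finset (Fin n → Fin n) := Finset.univ.filter (fun f => ∀ i, f i ≤ i)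

lemma card_Ln : (Ln n).card = n.factorial := by
  have h1 : Ln n = Fintype.piFinset (fun i : Fin n => Finset.Iic i) := by
    ext f
    simp [Ln, Fintype.mem_piFinset, Finset.mem_Iic]
  rw [h1, Fintype.card_piFinset]
  calc ∏ i : Fin n, (Finset.Iic i).card = ∏ i : Fin n, ((i : ℕ) + 1) := by
        apply Finset.prod_congr rfl
        intro i _
        exact Fin.card_Iic i
    _ = ∏ i ∈ Finset.range n, (i + 1) := Fin.prod_univ_eq_prod_range _ n
    _ = n.factorial := Finset.prod_range_add_one_eq_factorial n

lemma code_image_eq (e : Equiv.Perm (Fin n) → (Fin n → Fin n))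
    (he : Function.Injective e) (hbd : ∀ σ i, e σ i ≤ i) :
    Finset.univ.image e = Ln n := by
  apply Finset.eq_of_subset_of_card_le
  · intro f hf
    obtain ⟨σ, _, rfl⟩ := Finset.mem_image.mp hf
    exact Finset.mem_filter.mpr ⟨Finset.mem_univ _, hbd σ⟩
  · rw [card_Ln, Finset.card_image_of_injective _ he, Finset.card_univ,
      Fintype.card_perm, Fintype.card_fin]

lemma card_filter_code (e : Equiv.Perm (Fin n) → (Fin n → Fin n))
    (he : Function.Injective e) (hbd : ∀ σ i, e σ i ≤ i)
    (P : Equiv.Perm (Fin n) → Prop) (Q : (Fin n → Fin n) → Prop)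
    [DecidablePred P] [DecidablePred Q]
    (hPQ : ∀ σ, P σ ↔ Q (e σ)) :
    (Finset.univ.filter P).card = ((Ln n).filter Q).card := by
  apply Finset.card_bij (fun σ _ => e σ)
  · intro σ hσ
    rw [Finset.mem_filter] at hσ ⊢
    exact ⟨Finset.mem_filter.mpr ⟨Finset.mem_univ _, hbd σ⟩, (hPQ σ).mp hσ.2⟩
  · intro a _ b _ hab
    exact he hab
  · intro f hf
    rw [Finset.mem_filter] at hf
    obtain ⟨σ, rfl⟩ : ∃ σ, e σ = f := by
      have h3 : f ∈ Finset.univ.image e := by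
        rw [code_image_eq e he hbd]; exact hf.1
      obtain ⟨σ, _, h⟩ := Finset.mem_image.mp h3
      exact ⟨σ, h⟩
    exact ⟨σ, Finset.mem_filter.mpr ⟨Finset.mem_univ _, (hPQ σ).mpr hf.2⟩, rfl⟩

lemma card_filter_inv (P Q : Equiv.Perm (Fin n) → Prop) [DecidablePred P]
    [DecidablePred Q] (h : ∀ σ, P σ ↔ Q σ⁻¹) :
    (Finset.univ.filter P).card = (Finset.univ.filter Q).card := by
  apply Finset.card_bij (fun σ _ => σ⁻¹)
  · intro σ hσ
    rw [Finset.mem_filter] at hσ ⊢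
    exact ⟨Finset.mem_univ _, (h σ).mp hσ.2⟩
  · intro a _ b _ hab
    exact inv_injective hab
  · intro τ hτ
    rw [Finset.mem_filter] at hτ
    exact ⟨τ⁻¹, Finset.mem_filter.mpr ⟨Finset.mem_univ _, (h τ⁻¹).mpr (by simpa using hτ.2)⟩,
      rfl⟩
  -- last rfl : (τ⁻¹)⁻¹ = τ needs inv_inv
  
lemma rmilSet_eq (σ : Equiv.Perm (Fin n)) : RmilSet σ = LmapSet σ⁻¹ := by
  ext x
  simp only [RmilSet, LmapSet, Finset.mem_image, Finset.mem_filter, Finset.mem_univ,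
    true_and]
  constructor
  · rintro ⟨i, hi, rfl⟩
    intro y hy
    rw [Equiv.Perm.inv_apply_self]
    by_contra hc
    push_neg at hc
    rcases eq_or_lt_of_le hc with h1 | h1
    · have h2 : σ i = y := by rw [h1]; exact σ.apply_inv_self y
      rw [h2] at hy
      exact absurd hy (lt_irrefl _)
    · have := hi (σ⁻¹ y) h1
      rw [σ.apply_inv_self] at this
      exact absurd (lt_trans hy this) (lt_irrefl _)
  · intro h
    refine ⟨σ⁻¹ x, ?_, σ.apply_inv_self x⟩
    intro j hj
    rw [σ.apply_inv_self]
    by_contra hc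
    push_neg at hc
    rcases eq_or_lt_of_le hc with h1 | h1
    · have h2 : j = σ⁻¹ x := by rw [← h1]; exact (σ.inv_apply_self j).symm
      rw [h2] at hj
      exact absurd hj (lt_irrefl _)
    · have := h (σ j) h1
      rw [σ.inv_apply_self] at this
      exact absurd (lt_trans hj this) (lt_irrefl _)

lemma lmilSet_eq (σ : Equiv.Perm (Fin n)) : LmilSet σ = LmipSet σ⁻¹ := by
  ext x
  simp only [LmilSet, LmipSet, Finset.mem_image, Finset.mem_filter, Finset.mem_univ,
    true_and]
  constructor
  · rintro ⟨i, hi, rfl⟩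
    intro y hy
    rw [Equiv.Perm.inv_apply_self]
    by_contra hc
    push_neg at hc
    rcases eq_or_lt_of_le hc with h1 | h1
    · have h2 : σ i = y := by rw [← h1]; exact σ.apply_inv_self y
      rw [h2] at hy
      exact absurd hy (lt_irrefl _)
    · have := hi (σ⁻¹ y) h1
      rw [σ.apply_inv_self] at this
      exact absurd (lt_trans hy this) (lt_irrefl _)
  · intro h
    refine ⟨σ⁻¹ x, ?_, σ.apply_inv_self x⟩
    intro j hj
    rw [σ.apply_inv_self]
    by_contra hc
    push_neg at hc
    rcases eq_or_lt_of_le hc with h1 | h1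
    · have h2 : j = σ⁻¹ x := by rw [← h1]; exact (σ.inv_apply_self j).symm
      rw [h2] at hj
      exact absurd hj (lt_irrefl _)
    · have := h (σ j) h1
      rw [σ.inv_apply_self] at this
      exact absurd (lt_trans hj this) (lt_irrefl _)

end SortIdx
namespace SortIdx

variable {n : ℕ}

/-- The complementation involution on codes. -/
noncomputable def starCode (f : Fin n → Fin n) : Fin n → Fin n := fun i =>
  if f i = i then ⟨0, i.pos⟩ else if (f i : ℕ) = 0 then i else f i

lemma starCode_le (f : Fin n → Fin n) (hf : ∀ i, f i ≤ i) (i : Fin n) :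
    starCode f i ≤ i := by
  rw [starCode]
  split
  · rw [Fin.le_def]; exact Nat.zero_le _
  · split
    · exact le_refl i
    · exact hf i

lemma starCode_eq_self_iff (f : Fin n → Fin n) (i : Fin n) :
    starCode f i = i ↔ (f i : ℕ) = 0 := by
  rw [starCode]
  by_cases h1 : f i = i
  · rw [if_pos h1, h1]
    simp [Fin.ext_iff, eq_comm]
  · rw [if_neg h1]
    by_cases h2 : (f i : ℕ) = 0
    · simp [h2]
    · rw [if_neg h2]
      constructor
      · intro h; exact absurd h h1
      · intro h; exact absurd h h2

lemma starCode_eq_zero_iff (f : Fin n → Fin n) (i : Fin n) :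
    (starCode f i : ℕ) = 0 ↔ f i = i := by
  rw [starCode]
  by_cases h1 : f i = i
  · rw [if_pos h1]
    simp [h1]
  · rw [if_neg h1]
    by_cases h2 : (f i : ℕ) = 0
    · rw [if_pos h2]
      constructor
      · intro h3; exact Fin.ext (by omega)
      · intro h3; exact absurd h3 h1
    · rw [if_neg h2]
      constructor
      · intro h3; exact absurd h3 h2
      · intro h3; exact absurd h3 h1

lemma starCode_starCode (f : Fin n → Fin n) : starCode (starCode f) = f := by
  funext i
  by_cases h1 : f i = i
  · have ha : starCode f i = ⟨0, i.pos⟩ := by rw [starCode, if_pos h1]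
    rw [starCode, ha]
    by_cases hz : (⟨0, i.pos⟩ : Fin n) = i
    · rw [if_pos hz]
      exact (h1.trans hz.symm).symm
    · rw [if_neg hz, if_pos rfl]
      exact h1.symm
  · by_cases h2 : (f i : ℕ) = 0
    · have ha : starCode f i = i := by rw [starCode, if_neg h1, if_pos h2]
      rw [starCode, ha, if_pos rfl]
      refine Fin.ext ?_
      show 0 = (f i : ℕ)
      omega
    · have ha : starCode f i = f i := by rw [starCode, if_neg h1, if_neg h2]
      rw [starCode, ha, if_neg h1, if_neg h2]

lemma card_Ln_filter_symm (S T : Finset (Fin n)) :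
    ((Ln n).filter (fun f => Finset.univ.filter (fun i => f i = i) = S ∧
        Finset.univ.filter (fun i => (f i : ℕ) = 0) = T)).card =
    ((Ln n).filter (fun f => Finset.univ.filter (fun i => f i = i) = T ∧
        Finset.univ.filter (fun i => (f i : ℕ) = 0) = S)).card := by
  have hmem : ∀ (U V : Finset (Fin n)) (f : Fin n → Fin n),
      f ∈ (Ln n).filter (fun f => Finset.univ.filter (fun i => f i = i) = U ∧
        Finset.univ.filter (fun i => (f i : ℕ) = 0) = V) →
      starCode f ∈ (Ln n).filter (fun f => Finset.univ.filter (fun i => f i = i) = V ∧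
        Finset.univ.filter (fun i => (f i : ℕ) = 0) = U) := by
    intro U V f hf
    rw [Finset.mem_filter] at hf ⊢
    obtain ⟨hL, h1, h2⟩ := hf
    rw [Ln, Finset.mem_filter] at hL
    refine ⟨Finset.mem_filter.mpr ⟨Finset.mem_univ _, starCode_le f hL.2⟩, ?_, ?_⟩
    · rw [← h2]
      ext i
      simp only [Finset.mem_filter, Finset.mem_univ, true_and]
      exact starCode_eq_self_iff f i
    · rw [← h1]
      ext i
      simp only [Finset.mem_filter, Finset.mem_univ, true_and]
      exact starCode_eq_zero_iff f i
  apply Finset.card_bij' (fun f _ => starCode f) (fun f _ => starCode f)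
    (hmem S T) (hmem T S)
  · intro f _
    exact starCode_starCode f
  · intro f _
    exact starCode_starCode f

lemma nat_card_eq (P : Equiv.Perm (Fin n) → Prop) [DecidablePred P] :
    Nat.card {σ : Equiv.Perm (Fin n) // P σ} = (Finset.univ.filter P).card := by
  simp [Nat.card_eq_fintype_card, Fintype.card_subtype]

lemma lmapSet_eq_filter (σ : Equiv.Perm (Fin n)) :
    LmapSet σ = Finset.univ.filter (fun i => LehF σ i = i) := by
  ext i
  rw [mem_lmapSet_iff]
  simp

lemma lmipSet_eq_filter (σ : Equiv.Perm (Fin n)) :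
    LmipSet σ = Finset.univ.filter (fun i => (LehF σ i : ℕ) = 0) := by
  ext i
  rw [mem_lmipSet_iff]
  simp

end SortIdx


/-- The pairs of set-valued statistics `(Rmil, Lmil)`,
`(Lmap, Lmip)`, `(Cyc, Lmic₁)` have the same joint distribution on `Sₙ` and
each pair is symmetric. -/
theorem pairs_symmetric_equidistributed (n : ℕ) (S T : Finset (Fin n)) :
    (Nat.card {σ : Equiv.Perm (Fin n) // SortIdx.RmilSet σ = S ∧ SortIdx.LmilSet σ = T} =
      Nat.card {σ : Equiv.Perm (Fin n) // SortIdx.LmapSet σ = S ∧ SortIdx.LmipSet σ = T}) ∧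
    (Nat.card {σ : Equiv.Perm (Fin n) // SortIdx.LmapSet σ = S ∧ SortIdx.LmipSet σ = T} =
      Nat.card {σ : Equiv.Perm (Fin n) // SortIdx.CycSet σ = S ∧ SortIdx.Lmic1Set σ = T}) ∧
    (Nat.card {σ : Equiv.Perm (Fin n) // SortIdx.RmilSet σ = S ∧ SortIdx.LmilSet σ = T} =
      Nat.card {σ : Equiv.Perm (Fin n) // SortIdx.RmilSet σ = T ∧ SortIdx.LmilSet σ = S}) ∧
    (Nat.card {σ : Equiv.Perm (Fin n) // SortIdx.LmapSet σ = S ∧ SortIdx.LmipSet σ = T} =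
      Nat.card {σ : Equiv.Perm (Fin n) // SortIdx.LmapSet σ = T ∧ SortIdx.LmipSet σ = S}) ∧
    (Nat.card {σ : Equiv.Perm (Fin n) // SortIdx.CycSet σ = S ∧ SortIdx.Lmic1Set σ = T} =
      Nat.card {σ : Equiv.Perm (Fin n) // SortIdx.CycSet σ = T ∧ SortIdx.Lmic1Set σ = S}) := by
  have hA : ∀ (S T : Finset (Fin n)),
      Nat.card {σ : Equiv.Perm (Fin n) // SortIdx.LmapSet σ = S ∧ SortIdx.LmipSet σ = T}
        = ((SortIdx.Ln n).filter (fun f => Finset.univ.filter (fun i => f i = i) = S ∧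
            Finset.univ.filter (fun i => (f i : ℕ) = 0) = T)).card := by
    intro S T
    rw [SortIdx.nat_card_eq]
    apply SortIdx.card_filter_code SortIdx.LehF SortIdx.lehF_inj SortIdx.lehF_le
    intro σ
    rw [SortIdx.lmapSet_eq_filter, SortIdx.lmipSet_eq_filter]
  have hC : ∀ (S T : Finset (Fin n)),
      Nat.card {σ : Equiv.Perm (Fin n) // SortIdx.CycSet σ = S ∧ SortIdx.Lmic1Set σ = T}
        = ((SortIdx.Ln n).filter (fun f => Finset.univ.filter (fun i => f i = i) = S ∧
            Finset.univ.filter (fun i => (f i : ℕ) = 0) = T)).card := by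
    intro S T
    rw [SortIdx.nat_card_eq]
    apply SortIdx.card_filter_code SortIdx.Bcode SortIdx.bcode_inj SortIdx.bcode_le
    intro σ
    rw [SortIdx.cycSet_eq, SortIdx.lmic1Set_eq]
  have hR : ∀ (S T : Finset (Fin n)),
      Nat.card {σ : Equiv.Perm (Fin n) // SortIdx.RmilSet σ = S ∧ SortIdx.LmilSet σ = T}
        = Nat.card {σ : Equiv.Perm (Fin n) //
            SortIdx.LmapSet σ = S ∧ SortIdx.LmipSet σ = T} := by
    intro S T
    rw [SortIdx.nat_card_eq, SortIdx.nat_card_eq]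
    apply SortIdx.card_filter_inv
    intro σ
    rw [SortIdx.rmilSet_eq, SortIdx.lmilSet_eq]
  refine ⟨hR S T, ?_, ?_, ?_, ?_⟩
  · rw [hA S T, hC S T]
  · rw [hR S T, hR T S, hA S T, hA T S, SortIdx.card_Ln_filter_symm S T]
  · rw [hA S T, hA T S, SortIdx.card_Ln_filter_symm S T]
  · rw [hC S T, hC T S, SortIdx.card_Ln_filter_symm S T]
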